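/- Let T:C→C be a λ-firmly nonexpansive mapping on a subset C of a W-hyperbolic space, with λ ∈ (0,1). Then for all x, y ∈ C: d(Tx,Ty) ≤ ((1-λ)/(1+λ))·d(x,y) + (λ/(1+λ))·(d(Tx,y) + d(x,Ty)). -/

import Mathlib

open Metric Set

/-- A geodesic segment in a metric space joining `x` and `y`: the image of an
isometric embedding of a real interval sending the endpoints to `x` and `y`. -/
def IsGeodesicSegment {X : Type*} [MetricSpace X] (S : Set X) (x y : X) : Prop :=
  ∃ (a b : ℝ) (γ : ℝ → X), a ≤ b ∧ γ a = x ∧ γ b = y ∧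
    (∀ s ∈ Set.Icc a b, ∀ t ∈ Set.Icc a b, dist (γ s) (γ t) = |s - t|) ∧
    S = γ '' Set.Icc a b

/-- A metric space is geodesic if every two points are joined by a geodesic segment. -/
def GeodesicSpace (X : Type*) [MetricSpace X] : Prop :=
  ∀ x y : X, ∃ S : Set X, IsGeodesicSegment S x y

/-- `(X,d,W)` is a W-hyperbolic space: the convexity mapping `W` satisfies
axioms (W1)-(W4) for all parameters in `[0,1]`. -/
def IsWHyperbolic {X : Type*} [MetricSpace X] (W : X → X → ℝ → X) : Prop :=
  (∀ x y z : X, ∀ l ∈ Set.Icc (0:ℝ) 1,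
      dist z (W x y l) ≤ (1 - l) * dist z x + l * dist z y) ∧
  (∀ x y : X, ∀ l ∈ Set.Icc (0:ℝ) 1, ∀ l' ∈ Set.Icc (0:ℝ) 1,
      dist (W x y l) (W x y l') = |l - l'| * dist x y) ∧
  (∀ x y : X, ∀ l ∈ Set.Icc (0:ℝ) 1, W x y l = W y x (1 - l)) ∧
  (∀ x y z w : X, ∀ l ∈ Set.Icc (0:ℝ) 1,
      dist (W x z l) (W y w l) ≤ (1 - l) * dist x y + l * dist z w)

theorem stmt18 {X : Type*} [MetricSpace X] (W : X → X → ℝ → X)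
    (hW : IsWHyperbolic W) (C : Set X) (T : X → X) (l : ℝ) (hl : l ∈ Set.Ioo (0:ℝ) 1)
    (hTC : Set.MapsTo T C C)
    (hT : ∀ x ∈ C, ∀ y ∈ C, dist (T x) (T y) ≤ dist (W x (T x) l) (W y (T y) l)) :
    ∀ x ∈ C, ∀ y ∈ C,
      dist (T x) (T y) ≤ (1 - l) / (1 + l) * dist x y +
        l / (1 + l) * (dist (T x) y + dist x (T y)) := by
  obtain ⟨hl0, hl1⟩ := hl
  have hlI : l ∈ Set.Icc (0:ℝ) 1 := ⟨le_of_lt hl0, le_of_lt hl1⟩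
  obtain ⟨hW1, _, _, _⟩ := hW
  intro x hx y hy
  have h0 : dist (T x) (T y) ≤ dist (W x (T x) l) (W y (T y) l) := hT x hx y hy
  have h1 : dist (W x (T x) l) (W y (T y) l) ≤
      (1 - l) * dist (W x (T x) l) y + l * dist (W x (T x) l) (T y) :=
    hW1 y (T y) (W x (T x) l) l hlI
  have h2 : dist y (W x (T x) l) ≤ (1 - l) * dist y x + l * dist y (T x) :=
    hW1 x (T x) y l hlI
  have h3 : dist (T y) (W x (T x) l) ≤ (1 - l) * dist (T y) x + l * dist (T y) (T x) :=
    hW1 x (T x) (T y) l hlI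
  rw [dist_comm (W x (T x) l) y, dist_comm (W x (T x) l) (T y)] at h1
  rw [dist_comm y x, dist_comm y (T x)] at h2
  rw [dist_comm (T y) x, dist_comm (T y) (T x)] at h3
  have key : dist (T x) (T y) ≤ (1 - l) ^ 2 * dist x y
      + l * (1 - l) * (dist (T x) y + dist x (T y)) + l ^ 2 * dist (T x) (T y) := by
    nlinarith [h0, h1, h2, h3]
  have hpos : (0:ℝ) < 1 + l := by linarith
  rw [div_mul_eq_mul_div, div_mul_eq_mul_div, ← add_div, le_div_iff₀ hpos]
  nlinarith [key]
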